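/- There exists a metric space (X,d) whose underlying topological space is a Cantor space, such that (X,d) is doubling, is not uniformly disconnected, and is uniformly perfect (i.e., has type (1,0,1)), and such that the set S_UD(X,d) of points of X having no uniformly disconnected neighborhood is a singleton. -/

import Mathlib

open Metric Set
open scoped ENNReal NNReal

noncomputable section

/-- A metric space is doubling if there is `N` such that every closed ball of radius `r`
can be covered by at most `N` closed balls of radius `r / 2`. -/
def IsDoubling (X : Type*) [MetricSpace X] : Prop :=
  ∃ N : ℕ, ∀ (x : X) (r : ℝ), ∃ c : Finset X, c.card ≤ N ∧
    Metric.closedBall x r ⊆ ⋃ y ∈ c, Metric.closedBall y (r / 2)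

/-- Every `δ`-chain is trivial (constant). -/
def IsUniformlyDisconnectedWith (X : Type*) [MetricSpace X] (δ : ℝ) : Prop :=
  ∀ (N : ℕ) (x : ℕ → X),
    (∀ i : ℕ, 1 ≤ i → i ≤ N → dist (x (i - 1)) (x i) ≤ δ * dist (x 0) (x N)) →
    ∀ i ≤ N, x i = x 0

def IsUniformlyDisconnected (X : Type*) [MetricSpace X] : Prop :=
  ∃ δ : ℝ, 0 < δ ∧ δ < 1 ∧ IsUniformlyDisconnectedWith X δ

/-- `ρ`-uniform perfectness. -/
def IsUniformlyPerfectWith (X : Type*) [MetricSpace X] (ρ : ℝ) : Prop :=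
  ∀ (x : X) (r : ℝ), 0 < r → r < Metric.diam (Set.univ : Set X) →
    (Metric.closedBall x r \ Metric.ball x (ρ * r)).Nonempty

def IsUniformlyPerfect (X : Type*) [MetricSpace X] : Prop :=
  ∃ ρ : ℝ, 0 < ρ ∧ ρ ≤ 1 ∧ IsUniformlyPerfectWith X ρ

/-- A metric space has type `(u, v, w) ∈ {0,1}³` (here encoded by `Bool`s) if `u = 1` exactly
when it is doubling, `v = 1` exactly when it is uniformly disconnected, and `w = 1` exactly
when it is uniformly perfect. -/
def HasType (X : Type*) [MetricSpace X] (u v w : Bool) : Prop :=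
  (IsDoubling X ↔ u = true) ∧ (IsUniformlyDisconnected X ↔ v = true) ∧
    (IsUniformlyPerfect X ↔ w = true)

/-- `S_D`: points having no doubling neighborhood. -/
def SD (X : Type*) [MetricSpace X] : Set X :=
  {x : X | ∀ s ∈ nhds x, ¬ IsDoubling ↥s}

/-- `S_UD`: points having no uniformly disconnected neighborhood. -/
def SUD (X : Type*) [MetricSpace X] : Set X :=
  {x : X | ∀ s ∈ nhds x, ¬ IsUniformlyDisconnected ↥s}

/-- `S_UP`: points having no uniformly perfect neighborhood. -/
def SUP (X : Type*) [MetricSpace X] : Set X :=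
  {x : X | ∀ s ∈ nhds x, ¬ IsUniformlyPerfect ↥s}

/-- The ternary correspondence map `T(x) = Σ_{i≥1} 2 x_i / 3^i` (indices shifted to start
at `0`). -/
def cantorT (x : ℕ → Bool) : ℝ :=
  ∑' i : ℕ, 2 * (if x i then (1 : ℝ) else 0) / 3 ^ (i + 1)

/-- A Cantor space: a topological space homeomorphic to the middle-third Cantor set
(`cantorSet` is Mathlib's middle-third Cantor set in `ℝ`). -/
def IsCantorSpace (X : Type*) [TopologicalSpace X] : Prop :=
  Nonempty (X ≃ₜ ↥cantorSet)

/-- The first index at which `x` and `y` differ. -/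
def seqV (x y : ℕ → Bool) : ℕ := sInf {n | x n ≠ y n}

-- The standard ultrametric `e(x,y) = 3^{-(v(x,y)+1)}` on `2^ℕ` (indices starting at `0`,
-- corresponding to `3^{-min{n ≥ 1 : x_n ≠ y_n}}` with indices starting at `1`).
open Classical in
def cantorE (x y : ℕ → Bool) : ℝ :=
  if x = y then 0 else (3 : ℝ)⁻¹ ^ (seqV x y + 1)

/-- A shrinking sequence: positive, non-increasing, converging to `0`. -/
def IsShrinking (α : ℕ → ℝ) : Prop :=
  (∀ n, 0 < α n) ∧ (∀ m n : ℕ, m ≤ n → α n ≤ α m) ∧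
    Filter.Tendsto α Filter.atTop (nhds 0)

-- The distance `d_α(x,y) = α (v(x,y))` associated with a sequence `α`.
open Classical in
def seqDist (α : ℕ → ℝ) (x y : ℕ → Bool) : ℝ :=
  if x = y then 0 else α (seqV x y)

lemma seqV_comm (x y : ℕ → Bool) : seqV x y = seqV y x := by
  unfold seqV
  congr 1
  ext n
  exact ne_comm

lemma seqDist_self (α : ℕ → ℝ) (x : ℕ → Bool) : seqDist α x x = 0 := by
  rw [seqDist, if_pos rfl]

lemma seqDist_of_ne (α : ℕ → ℝ) {x y : ℕ → Bool} (h : x ≠ y) :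
    seqDist α x y = α (seqV x y) := by
  rw [seqDist, if_neg h]

lemma seqDist_nonneg {α : ℕ → ℝ} (hα : ∀ n, 0 < α n) (x y : ℕ → Bool) :
    0 ≤ seqDist α x y := by
  rcases eq_or_ne x y with h | h
  · rw [h, seqDist_self]
  · rw [seqDist_of_ne α h]
    exact (hα _).le

lemma min_seqV_le {x y z : ℕ → Bool} (hxz : x ≠ z) :
    min (seqV x y) (seqV y z) ≤ seqV x z := by
  have hne : {n | x n ≠ z n}.Nonempty := by
    rcases Function.ne_iff.mp hxz with ⟨n, hn⟩
    exact ⟨n, hn⟩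
  have hmem : x (seqV x z) ≠ z (seqV x z) := Nat.sInf_mem hne
  rcases ne_or_eq (x (seqV x z)) (y (seqV x z)) with h | h
  · exact le_trans (min_le_left _ _) (Nat.sInf_le h)
  · have h' : y (seqV x z) ≠ z (seqV x z) := by rw [← h]; exact hmem
    exact le_trans (min_le_right _ _) (Nat.sInf_le h')

/-- The sequentially metrized Cantor space `(2^ℕ, d_α)` for a shrinking sequence `α`. -/
def seqMetricSpace (α : ℕ → ℝ) (hα : IsShrinking α) : MetricSpace (ℕ → Bool) where
  dist := seqDist α
  dist_self x := seqDist_self α x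
  dist_comm x y := by
    show seqDist α x y = seqDist α y x
    rcases eq_or_ne x y with h | h
    · rw [h]
    · rw [seqDist_of_ne α h, seqDist_of_ne α h.symm, seqV_comm]
  dist_triangle x y z := by
    show seqDist α x z ≤ seqDist α x y + seqDist α y z
    rcases eq_or_ne x z with hxz | hxz
    · rw [hxz, seqDist_self]
      exact add_nonneg (seqDist_nonneg hα.1 _ _) (seqDist_nonneg hα.1 _ _)
    rcases eq_or_ne x y with hxy | hxy
    · subst hxy
      rw [seqDist_self, zero_add]
    rcases eq_or_ne y z with hyz | hyz
    · subst hyz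
      rw [seqDist_self, add_zero]
    rw [seqDist_of_ne α hxz, seqDist_of_ne α hxy, seqDist_of_ne α hyz]
    have h1 : α (seqV x z) ≤ α (min (seqV x y) (seqV y z)) :=
      hα.2.1 _ _ (min_seqV_le hxz)
    rcases min_cases (seqV x y) (seqV y z) with ⟨he, _⟩ | ⟨he, _⟩
    · rw [he] at h1
      exact h1.trans (le_add_of_nonneg_right (hα.1 _).le)
    · rw [he] at h1
      exact h1.trans (le_add_of_nonneg_left (hα.1 _).le)
  eq_of_dist_eq_zero := by
    intro x y h
    by_contra hne
    have h' : seqDist α x y = 0 := h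
    rw [seqDist_of_ne α hne] at h'
    exact absurd h' (ne_of_gt (hα.1 _))

/-- The Assouad dimension of a metric space. -/
def assouadDim (X : Type*) [MetricSpace X] : ℝ≥0∞ :=
  sInf {d : ℝ≥0∞ | ∃ s : ℝ, 0 < s ∧ d = ENNReal.ofReal s ∧ ∃ K : ℝ, 0 < K ∧
    ∀ ε : ℝ, 0 < ε → ε < 2 → ∀ r : ℝ, 0 < r → ∀ x : X,
      ∃ c : Finset X, (c.card : ℝ) ≤ K * ε ^ (-s) ∧
        Metric.closedBall x r ⊆ ⋃ y ∈ c, Metric.closedBall y (ε * r)}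

/-- The Hausdorff dimension of (the whole of) a metric space. -/
def hausdorffDim (X : Type*) [MetricSpace X] : ℝ≥0∞ := dimH (Set.univ : Set X)

/-- The topology induced by a metric. -/
def metricTopology {X : Type*} (m : MetricSpace X) : TopologicalSpace X :=
  m.toPseudoMetricSpace.toUniformSpace.toTopologicalSpace

/-- `f : X → Y` is quasi-symmetric: for some self-homeomorphism `η` of `[0,∞)`,
`d(f x, f y)/d(f x, f z) ≤ η (d(x,y)/d(x,z))` for all distinct `x, y, z`. -/
def IsQuasiSymmetric {X Y : Type*} [MetricSpace X] [MetricSpace Y] (f : X → Y) : Prop :=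
  ∃ η : Homeomorph (Set.Ici (0 : ℝ)) (Set.Ici (0 : ℝ)),
    ∀ x y z : X, x ≠ y → x ≠ z → y ≠ z →
      dist (f x) (f y) / dist (f x) (f z) ≤
        (η ⟨dist x y / dist x z, div_nonneg dist_nonneg dist_nonneg⟩ : ℝ)

/-- Two metric spaces (given by explicit metric structures) are quasi-symmetrically
equivalent if there is a quasi-symmetric homeomorphism between them. -/
def QSEquiv (X Y : Type*) (mX : MetricSpace X) (mY : MetricSpace Y) : Prop :=
  ∃ f : @Homeomorph X Y (metricTopology mX) (metricTopology mY),
    @IsQuasiSymmetric X Y mX mY f.toEquiv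


/-- The `ℓ^∞`-product metric (the sup metric) on `X × Y`. -/
def prodMetric {X Y : Type*} (mX : MetricSpace X) (mY : MetricSpace Y) :
    MetricSpace (X × Y) :=
  letI := mX; letI := mY; Prod.metricSpaceMax




def Gv (r : ℝ) (y : ℕ → Bool) : ℝ := ∑' i, (if y i then (1:ℝ) else 0) * ((1-r) * r^i)

variable {r : ℝ}

lemma Gterm_nonneg (hr1 : (0:ℝ) ≤ r) (hr2 : r < 1/2) (y : ℕ → Bool) (i : ℕ) :
    0 ≤ (if y i then (1:ℝ) else 0) * ((1-r) * r^i) := by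
  have h1 : (0:ℝ) ≤ 1 - r := by linarith
  by_cases h : y i <;> simp [h] <;> positivity

lemma Gterm_le (hr1 : (0:ℝ) ≤ r) (hr2 : r < 1/2) (y : ℕ → Bool) (i : ℕ) :
    (if y i then (1:ℝ) else 0) * ((1-r) * r^i) ≤ (1-r) * r^i := by
  have h1 : (0:ℝ) ≤ 1 - r := by linarith
  by_cases h : y i <;> simp [h] <;> positivity

lemma Gsummable (hr1 : (0:ℝ) ≤ r) (hr2 : r < 1/2) (y : ℕ → Bool) :
    Summable (fun i => (if y i then (1:ℝ) else 0) * ((1-r) * r^i)) := by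
  apply Summable.of_nonneg_of_le (Gterm_nonneg hr1 hr2 y) (Gterm_le hr1 hr2 y)
  exact (summable_geometric_of_lt_one hr1 (by linarith)).mul_left _

lemma tsum_geom_mul (hr1 : (0:ℝ) ≤ r) (hr2 : r < 1/2) (c : ℝ) :
    ∑' i : ℕ, c * r^i = c * (1-r)⁻¹ := by
  rw [tsum_mul_left, tsum_geometric_of_lt_one hr1 (by linarith)]

lemma Gv_nonneg (hr1 : (0:ℝ) ≤ r) (hr2 : r < 1/2) (y : ℕ → Bool) : 0 ≤ Gv r y :=
  tsum_nonneg (Gterm_nonneg hr1 hr2 y)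

lemma Gv_le_one (hr1 : (0:ℝ) ≤ r) (hr2 : r < 1/2) (y : ℕ → Bool) : Gv r y ≤ 1 := by
  have h1 : (0:ℝ) < 1 - r := by linarith
  have := Summable.tsum_le_tsum (Gterm_le hr1 hr2 y) (Gsummable hr1 hr2 y)
    ((summable_geometric_of_lt_one hr1 (by linarith)).mul_left _)
  rw [show (fun i : ℕ => (1-r) * r^i) = fun i : ℕ => (1-r) * r^i from rfl] at this
  calc Gv r y ≤ ∑' i : ℕ, (1-r) * r^i := this
    _ = (1-r) * (1-r)⁻¹ := tsum_geom_mul hr1 hr2 _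
    _ = 1 := mul_inv_cancel₀ h1.ne'

lemma Gv_false (r : ℝ) : Gv r (fun _ => false) = 0 := by
  simp [Gv]

lemma Gv_true (hr1 : (0:ℝ) ≤ r) (hr2 : r < 1/2) : Gv r (fun _ => true) = 1 := by
  have h1 : (0:ℝ) < 1 - r := by linarith
  simp only [Gv, if_true, one_mul]
  rw [tsum_geom_mul hr1 hr2, mul_inv_cancel₀ h1.ne']


def Gd (r : ℝ) (y w : ℕ → Bool) (i : ℕ) : ℝ :=
  ((if y i then (1:ℝ) else 0) - (if w i then (1:ℝ) else 0)) * ((1-r) * r^i)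

lemma norm_Gd_le (hr1 : (0:ℝ) ≤ r) (hr2 : r < 1/2) (y w : ℕ → Bool) (i : ℕ) :
    ‖Gd r y w i‖ ≤ (1-r) * r^i := by
  have h1 : (0:ℝ) < 1 - r := by linarith
  rw [Gd, Real.norm_eq_abs, abs_mul]
  have hb : |(if y i then (1:ℝ) else 0) - (if w i then (1:ℝ) else 0)| ≤ 1 := by
    by_cases hy : y i <;> by_cases hw : w i <;> simp [hy, hw]
  calc _ ≤ 1 * |(1-r)*r^i| := mul_le_mul_of_nonneg_right hb (abs_nonneg _)
    _ = (1-r) * r^i := by rw [one_mul, abs_of_nonneg (by positivity)]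

lemma Gd_summable (hr1 : (0:ℝ) ≤ r) (hr2 : r < 1/2) (y w : ℕ → Bool) :
    Summable (Gd r y w) := by
  apply Summable.of_norm
  apply Summable.of_nonneg_of_le (fun i => norm_nonneg _) (norm_Gd_le hr1 hr2 y w)
  exact (summable_geometric_of_lt_one hr1 (by linarith)).mul_left _

lemma geom_summable (hr1 : (0:ℝ) ≤ r) (hr2 : r < 1/2) :
    Summable (fun i : ℕ => (1-r) * r^i) :=
  (summable_geometric_of_lt_one hr1 (by linarith)).mul_left _

lemma Gv_sub (hr1 : (0:ℝ) ≤ r) (hr2 : r < 1/2) (y w : ℕ → Bool) :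
    Gv r y - Gv r w = ∑' i, Gd r y w i := by
  rw [Gv, Gv, ← Summable.tsum_sub (Gsummable hr1 hr2 y) (Gsummable hr1 hr2 w)]
  congr 1; ext i; rw [Gd]; ring

lemma tsum_geom_shift (hr1 : (0:ℝ) ≤ r) (hr2 : r < 1/2) (m : ℕ) :
    ∑' i : ℕ, (1-r) * r^(i+m) = r ^ m := by
  have h1 : (0:ℝ) < 1 - r := by linarith
  have : (fun i : ℕ => (1-r) * r^(i+m)) = fun i : ℕ => ((1-r) * r^m) * r^i := by
    ext i; rw [pow_add]; ring
  rw [this, tsum_geom_mul hr1 hr2, mul_assoc, mul_comm (r^m), ← mul_assoc,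
    mul_inv_cancel₀ h1.ne', one_mul]

lemma Gv_tail_bound (hr1 : (0:ℝ) ≤ r) (hr2 : r < 1/2) (y w : ℕ → Bool) (m : ℕ)
    (h : ∀ i < m, y i = w i) : |Gv r y - Gv r w| ≤ r ^ m := by
  have hsf := Gd_summable hr1 hr2 y w
  rw [Gv_sub hr1 hr2, ← Summable.sum_add_tsum_nat_add' (hsf.comp_injective (add_left_injective m))]
  have hz : ∑ i ∈ Finset.range m, Gd r y w i = 0 := by
    apply Finset.sum_eq_zero
    intro i hi
    rw [Gd]
    simp [h i (Finset.mem_range.mp hi)]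
  have hsh : Summable (fun i => Gd r y w (i + m)) := hsf.comp_injective (add_left_injective m)
  have hgs : Summable (fun i : ℕ => (1-r) * r^(i+m)) :=
    (geom_summable hr1 hr2).comp_injective (add_left_injective m)
  rw [hz, zero_add, ← Real.norm_eq_abs]
  calc ‖∑' i, Gd r y w (i + m)‖ ≤ ∑' i, ‖Gd r y w (i + m)‖ := norm_tsum_le_tsum_norm hsh.norm
    _ ≤ ∑' i : ℕ, (1-r) * r^(i+m) :=
        Summable.tsum_le_tsum (fun i => norm_Gd_le hr1 hr2 y w (i+m)) hsh.norm hgs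
    _ = r ^ m := tsum_geom_shift hr1 hr2 m

-- separation: y,w agree below k, differ at k
lemma Gv_sep (hr1 : (0:ℝ) ≤ r) (hr2 : r < 1/2) (y w : ℕ → Bool) (k : ℕ)
    (h : ∀ i < k, y i = w i) (hk : y k ≠ w k) :
    (1 - 2*r) * r ^ k ≤ |Gv r y - Gv r w| ∧ |Gv r y - Gv r w| ≤ r ^ k := by
  constructor
  · have hsf := Gd_summable hr1 hr2 y w
    have hsh : Summable (fun i => Gd r y w (i + (k+1))) := hsf.comp_injective (add_left_injective _)
    have hgs : Summable (fun i : ℕ => (1-r) * r^(i+(k+1))) :=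
      (geom_summable hr1 hr2).comp_injective (add_left_injective _)
    have hd : Gv r y - Gv r w = Gd r y w k + ∑' i, Gd r y w (i + (k+1)) := by
      rw [Gv_sub hr1 hr2, ← Summable.sum_add_tsum_nat_add' (hsf.comp_injective (add_left_injective (k+1))), Finset.sum_range_succ]
      have hz : ∑ i ∈ Finset.range k, Gd r y w i = 0 := by
        apply Finset.sum_eq_zero
        intro i hi
        rw [Gd]
        simp [h i (Finset.mem_range.mp hi)]
      rw [hz, zero_add]
    have habs : |Gd r y w k| = (1-r) * r^k := by
      rw [Gd]
      have : |(if y k then (1:ℝ) else 0) - (if w k then (1:ℝ) else 0)| = 1 := by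
        by_cases hy : y k <;> by_cases hw : w k <;> simp_all
      rw [abs_mul, this, one_mul, abs_of_nonneg (by nlinarith [pow_nonneg hr1 k])]
    have htail : |∑' i, Gd r y w (i + (k+1))| ≤ r^(k+1) := by
      rw [← Real.norm_eq_abs]
      calc ‖∑' i, Gd r y w (i + (k+1))‖ ≤ ∑' i, ‖Gd r y w (i + (k+1))‖ := norm_tsum_le_tsum_norm hsh.norm
        _ ≤ ∑' i : ℕ, (1-r) * r^(i+(k+1)) :=
            Summable.tsum_le_tsum (fun i => norm_Gd_le hr1 hr2 y w _) hsh.norm hgs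
        _ = r ^ (k+1) := tsum_geom_shift hr1 hr2 _
    rw [hd]
    have h1 := abs_sub_abs_le_abs_sub (Gd r y w k) (-(∑' i, Gd r y w (i + (k+1))))
    have h2 : |Gd r y w k + ∑' i, Gd r y w (i+(k+1))| ≥ |Gd r y w k| - |∑' i, Gd r y w (i+(k+1))| := by
      have := abs_add_le (Gd r y w k + ∑' i, Gd r y w (i+(k+1))) (-(∑' i, Gd r y w (i+(k+1))))
      simp only [add_neg_cancel_right, abs_neg] at this
      linarith
    have hp : (0:ℝ) ≤ r^k := pow_nonneg hr1 k
    have : (1-r) * r^k - r^(k+1) = (1-2*r) * r^k := by rw [pow_succ]; ring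
    rw [habs] at h2
    linarith
  · exact Gv_tail_bound hr1 hr2 y w k h

lemma Gv_flip (hr1 : (0:ℝ) ≤ r) (hr2 : r < 1/2) (y : ℕ → Bool) (k : ℕ) :
    |Gv r y - Gv r (Function.update y k (!y k))| = (1-r) * r ^ k := by
  have hsf := Gd_summable hr1 hr2 y (Function.update y k (!y k))
  rw [Gv_sub hr1 hr2]
  rw [tsum_eq_single k (by
    intro i hi
    rw [Gd, Function.update_of_ne hi]
    simp)]
  rw [Gd, Function.update_self]
  have : |(if y k then (1:ℝ) else 0) - (if !y k then (1:ℝ) else 0)| = 1 := by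
    by_cases hy : y k <;> simp [hy]
  rw [abs_mul, this, one_mul, abs_of_nonneg (by nlinarith [pow_nonneg hr1 k])]



-- copies from preamble (in final file these exist)


variable {r : ℝ}

-- seqV facts
lemma seqV_agree {y w : ℕ → Bool} (i : ℕ) (hi : i < seqV y w) : y i = w i := by
  by_contra h
  unfold seqV at hi
  exact absurd (Nat.sInf_le (show i ∈ {n | y n ≠ w n} from h)) (not_le.mpr hi)

lemma seqV_ne {y w : ℕ → Bool} (h : y ≠ w) : y (seqV y w) ≠ w (seqV y w) := by
  unfold seqV
  apply Nat.sInf_mem (s := {n | y n ≠ w n})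
  rcases Function.ne_iff.mp h with ⟨n, hn⟩
  exact ⟨n, hn⟩

lemma Gv_sep' (hr1 : (0:ℝ) ≤ r) (hr2 : r < 1/2) {y w : ℕ → Bool} (h : y ≠ w) :
    (1 - 2*r) * r ^ (seqV y w) ≤ |Gv r y - Gv r w| ∧ |Gv r y - Gv r w| ≤ r ^ (seqV y w) :=
  Gv_sep hr1 hr2 y w _ (fun i hi => seqV_agree i hi) (seqV_ne h)

lemma Gv_inj (hr1 : (1:ℝ)/4 ≤ r) (hr2 : r < 1/2) : Function.Injective (Gv r) := by
  intro y w h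
  by_contra hne
  have h0 : (0:ℝ) ≤ r := le_trans (by norm_num) hr1
  have := (Gv_sep' h0 hr2 hne).1
  rw [h, sub_self, abs_zero] at this
  nlinarith [pow_pos (lt_of_lt_of_le (by norm_num : (0:ℝ) < 1/4) hr1) (seqV y w)]

-- cons
def bcons (b : Bool) (y : ℕ → Bool) : ℕ → Bool := fun i => if i = 0 then b else y (i-1)

lemma Gv_bcons (hr1 : (0:ℝ) ≤ r) (hr2 : r < 1/2) (b : Bool) (y : ℕ → Bool) :
    Gv r (bcons b y) = (if b then (1:ℝ) else 0) * (1-r) + r * Gv r y := by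
  rw [Gv, Summable.tsum_eq_zero_add (Gsummable hr1 hr2 _)]
  congr 1
  · simp [bcons]
  · rw [Gv, ← tsum_mul_left]
    congr 1
    ext i
    have : bcons b y (i+1) = y i := by simp [bcons]
    rw [this, pow_succ]
    ring

lemma Gv_dense_aux (hr1 : (1:ℝ)/4 ≤ r) (hr2 : r < 1/2) :
    ∀ k : ℕ, ∀ u ∈ Icc (0:ℝ) 1, ∃ y, |Gv r y - u| ≤ max (1-2*r) (r^k) := by
  have h0 : (0:ℝ) < r := lt_of_lt_of_le (by norm_num) hr1
  intro k
  induction k with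
  | zero =>
    intro u hu
    refine ⟨fun _ => false, ?_⟩
    have : Gv r (fun _ => false) = 0 := by simp [Gv]
    rw [this]
    rw [abs_of_nonpos (by linarith [hu.1])]
    simp only [pow_zero]
    have : (1:ℝ) ≤ max (1-2*r) 1 := le_max_right _ _
    linarith [hu.2]
  | succ k ih =>
    intro u hu
    obtain ⟨hu0, hu1⟩ := hu
    rcases le_or_gt u r with hur | hur
    · obtain ⟨y, hy⟩ := ih (u/r) ⟨by positivity, by rw [div_le_one h0]; exact hur⟩
      refine ⟨bcons false y, ?_⟩
      rw [Gv_bcons h0.le hr2]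
      have hz : (if (false:Bool) then (1:ℝ) else 0) * (1-r) = 0 := by norm_num
      rw [hz, zero_add]
      have e : r * Gv r y - u = r * (Gv r y - u/r) := by field_simp
      rw [e, abs_mul, abs_of_pos h0]
      calc r * |Gv r y - u/r| ≤ r * max (1-2*r) (r^k) := by
            exact mul_le_mul_of_nonneg_left hy h0.le
        _ ≤ max (1-2*r) (r^(k+1)) := by
            rw [mul_max_of_nonneg _ _ h0.le]
            apply max_le
            · apply le_max_of_le_left; nlinarith
            · apply le_max_of_le_right; rw [pow_succ]; nlinarith [pow_nonneg h0.le k]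
    · rcases le_or_gt (1-r) u with hur2 | hur2
      · obtain ⟨y, hy⟩ := ih ((u-(1-r))/r) ⟨div_nonneg (by linarith) h0.le, by rw [div_le_one h0]; linarith⟩
        refine ⟨bcons true y, ?_⟩
        rw [Gv_bcons h0.le hr2]
        have hz : (if (true:Bool) then (1:ℝ) else 0) * (1-r) = 1 - r := by norm_num
        rw [hz]
        have e : 1 - r + r * Gv r y - u = r * (Gv r y - (u-(1-r))/r) := by
          field_simp
          ring
        rw [e, abs_mul, abs_of_pos h0]
        calc r * |Gv r y - (u-(1-r))/r| ≤ r * max (1-2*r) (r^k) :=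
              mul_le_mul_of_nonneg_left hy h0.le
          _ ≤ max (1-2*r) (r^(k+1)) := by
              rw [mul_max_of_nonneg _ _ h0.le]
              apply max_le
              · apply le_max_of_le_left; nlinarith
              · apply le_max_of_le_right; rw [pow_succ]; nlinarith [pow_nonneg h0.le k]
      · refine ⟨bcons false (fun _ => true), ?_⟩
        rw [Gv_bcons h0.le hr2, Gv_true h0.le hr2]
        have hz : (if (false:Bool) then (1:ℝ) else 0) * (1-r) = 0 := by norm_num
        rw [hz, zero_add, mul_one]
        apply le_max_of_le_left
        rw [abs_le]
        constructor <;> linarith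

lemma Gv_dense (hr1 : (1:ℝ)/4 ≤ r) (hr2 : r < 1/2) (u : ℝ) (hu : u ∈ Icc (0:ℝ) 1) :
    ∃ y, |Gv r y - u| ≤ 1 - 2*r := by
  have h0 : (0:ℝ) < r := lt_of_lt_of_le (by norm_num) hr1
  obtain ⟨k, hk⟩ := exists_pow_lt_of_lt_one (show (0:ℝ) < 1-2*r by linarith) (by linarith : r < 1)
  obtain ⟨y, hy⟩ := Gv_dense_aux hr1 hr2 k u hu
  exact ⟨y, hy.trans (max_le le_rfl hk.le)⟩

-- chain lemma on seqV
lemma vchain : ∀ (N : ℕ) (y : ℕ → (ℕ → Bool)), y 0 ≠ y N →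
    ∃ i, 1 ≤ i ∧ i ≤ N ∧ y (i-1) ≠ y i ∧ seqV (y (i-1)) (y i) ≤ seqV (y 0) (y N) := by
  intro N
  induction N with
  | zero => intro y h; exact absurd rfl h
  | succ N ih =>
    intro y h
    rcases eq_or_ne (y 0) (y N) with h0N | h0N
    · refine ⟨N+1, by omega, le_rfl, ?_, ?_⟩
      · simpa [← h0N] using h
      · simp only [Nat.add_sub_cancel]
        rw [show seqV (y N) (y (N+1)) = seqV (y 0) (y (N+1)) by rw [← h0N]]
    · rcases eq_or_ne (y N) (y (N+1)) with hN | hN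
      · obtain ⟨i, h1, h2, h3, h4⟩ := ih y h0N
        refine ⟨i, h1, by omega, h3, ?_⟩
        rwa [show seqV (y 0) (y (N+1)) = seqV (y 0) (y N) by rw [← hN]]
      · rcases le_or_gt (seqV (y N) (y (N+1))) (seqV (y 0) (y (N+1))) with hle | hgt
        · exact ⟨N+1, by omega, le_rfl, by simpa using hN, by simpa using hle⟩
        · -- seqV (y 0) (y N) ≤ seqV (y 0) (y (N+1))
          have hkey : seqV (y 0) (y N) ≤ seqV (y 0) (y (N+1)) := by
            have := min_seqV_le (x := y 0) (y := y N) (z := y (N+1)) h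
            rcases min_cases (seqV (y 0) (y N)) (seqV (y N) (y (N+1))) with ⟨he, _⟩ | ⟨he, hc⟩
            · rwa [he] at this
            · rw [he] at this; omega
          obtain ⟨i, h1, h2, h3, h4⟩ := ih y h0N
          exact ⟨i, h1, by omega, h3, h4.trans hkey⟩




def rr (n : ℕ) : ℝ := 1/2 - 1/(2*((n:ℝ)+2))

lemma rr_ge (n : ℕ) : (1:ℝ)/4 ≤ rr n := by
  have h0 : (0:ℝ) ≤ (n:ℝ) := Nat.cast_nonneg n
  have h4 : (1:ℝ)/(2*((n:ℝ)+2)) ≤ 1/4 := by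
    apply one_div_le_one_div_of_le (by norm_num) (by linarith)
  rw [rr]; linarith

lemma rr_lt (n : ℕ) : rr n < 1/2 := by
  have h2 : (0:ℝ) < (n:ℝ) + 2 := by positivity
  have : 0 < 1/(2*((n:ℝ)+2)) := by positivity
  rw [rr]; linarith

lemma rr_pos (n : ℕ) : (0:ℝ) < rr n := lt_of_lt_of_le (by norm_num) (rr_ge n)

lemma one_sub_two_rr (n : ℕ) : 1 - 2 * rr n = 1/((n:ℝ)+2) := by
  have h2 : ((n:ℝ)+2) ≠ 0 := by positivity
  have e1 : 1 - 2 * rr n = 2 * (1/(2*((n:ℝ)+2))) := by rw [rr]; ring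
  rw [e1, one_div, mul_inv, ← mul_assoc, mul_inv_cancel₀ (two_ne_zero), one_mul, one_div]

open Classical in
def Phi (x : ℕ → Bool) : ℝ :=
  if h : ∃ n, x n = false then
    (4:ℝ)⁻¹ ^ (Nat.find h) * (1 + Gv (rr (Nat.find h)) (fun i => x (Nat.find h + 1 + i)))
  else 0

def mkp (n : ℕ) (y : ℕ → Bool) : ℕ → Bool :=
  fun i => if i < n then true else if i = n then false else y (i - (n+1))

lemma mkp_exists (n : ℕ) (y : ℕ → Bool) : ∃ m, mkp n y m = false :=
  ⟨n, by simp [mkp]⟩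

lemma mkp_self (n : ℕ) (y : ℕ → Bool) : mkp n y n = false := by simp [mkp]
lemma mkp_lt {i n : ℕ} (y : ℕ → Bool) (h : i < n) : mkp n y i = true := by simp [mkp, h]
lemma mkp_gt {i n : ℕ} (y : ℕ → Bool) (h : n < i) : mkp n y i = y (i - (n+1)) := by
  rw [mkp]
  rw [if_neg (by omega), if_neg (by omega)]

lemma Phi_allTrue : Phi (fun _ => true) = 0 := by
  rw [Phi, dif_neg]
  push_neg
  intro n
  simp

lemma Phi_mkp (n : ℕ) (y : ℕ → Bool) : Phi (mkp n y) = (4:ℝ)⁻¹ ^ n * (1 + Gv (rr n) y) := by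
  classical
  rw [Phi, dif_pos (mkp_exists n y)]
  have hfind : Nat.find (mkp_exists n y) = n := by
    rw [Nat.find_eq_iff]
    constructor
    · simp [mkp]
    · intro m hm
      simp [mkp, hm]
  rw [hfind]
  congr 1
  congr 1
  congr 1
  funext i
  simp only [mkp]
  rw [if_neg (by omega), if_neg (by omega)]
  congr 1
  omega

lemma Phi_cases (x : ℕ → Bool) : x = (fun _ => true) ∨ ∃ n y, x = mkp n y := by
  classical
  by_cases h : ∃ n, x n = false
  · right
    set n := Nat.find h with hn
    refine ⟨n, fun i => x (n + 1 + i), ?_⟩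
    funext i
    simp only [mkp]
    rcases lt_trichotomy i n with hi | hi | hi
    · rw [if_pos hi]
      have := Nat.find_min h hi
      revert this
      cases x i <;> simp
    · rw [hi, if_neg (lt_irrefl n), if_pos rfl]
      exact Nat.find_spec h
    · rw [if_neg (by omega), if_neg (by omega)]
      congr 1
      omega
  · left
    push_neg at h
    funext i
    have := h i
    revert this
    cases x i <;> simp

lemma Phi_mkp_mem (n : ℕ) (y : ℕ → Bool) :
    Phi (mkp n y) ∈ Icc ((4:ℝ)⁻¹ ^ n) (2 * (4:ℝ)⁻¹ ^ n) := by
  rw [Phi_mkp]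
  have h1 := Gv_nonneg (rr_pos n).le (rr_lt n) y
  have h2 := Gv_le_one (rr_pos n).le (rr_lt n) y
  have hp : (0:ℝ) < (4:ℝ)⁻¹ ^ n := by positivity
  constructor <;> nlinarith

lemma Phi_nonneg (x : ℕ → Bool) : 0 ≤ Phi x := by
  rcases Phi_cases x with h | ⟨n, y, h⟩
  · rw [h, Phi_allTrue]
  · rw [h]
    have := (Phi_mkp_mem n y).1
    have hp : (0:ℝ) < (4:ℝ)⁻¹ ^ n := by positivity
    linarith

lemma Phi_le_two (x : ℕ → Bool) : Phi x ≤ 2 := by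
  rcases Phi_cases x with h | ⟨n, y, h⟩
  · rw [h, Phi_allTrue]; norm_num
  · rw [h]
    have := (Phi_mkp_mem n y).2
    have hp : (4:ℝ)⁻¹ ^ n ≤ 1 := by
      apply pow_le_one₀ <;> norm_num
    linarith

lemma qpow_succ_le (n m : ℕ) (h : n < m) : (4:ℝ)⁻¹ ^ m ≤ (4:ℝ)⁻¹ ^ n / 4 := by
  have h1 : (4:ℝ)⁻¹ ^ m ≤ (4:ℝ)⁻¹ ^ (n+1) :=
    pow_le_pow_of_le_one (by norm_num) (by norm_num) (by omega)
  rw [pow_succ] at h1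
  calc (4:ℝ)⁻¹ ^ m ≤ (4:ℝ)⁻¹^n * 4⁻¹ := h1
    _ = (4:ℝ)⁻¹ ^ n / 4 := by ring

-- pieces are separated
lemma Phi_mkp_ne (n m : ℕ) (hnm : n ≠ m) (y w : ℕ → Bool) :
    (4:ℝ)⁻¹ ^ (min n m) / 2 ≤ |Phi (mkp n y) - Phi (mkp m w)| := by
  wlog h : m < n generalizing n m y w
  · rw [abs_sub_comm, min_comm]
    exact this m n (Ne.symm hnm) w y (by omega)
  have h1 := Phi_mkp_mem n y
  have h2 := Phi_mkp_mem m w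
  have hle : (4:ℝ)⁻¹ ^ n ≤ (4:ℝ)⁻¹ ^ m / 4 := qpow_succ_le m n h
  have hp1 : (0:ℝ) ≤ (4:ℝ)⁻¹ ^ n := by positivity
  have hp2 : (0:ℝ) ≤ (4:ℝ)⁻¹ ^ m := by positivity
  rw [min_eq_right h.le]
  rw [abs_sub_comm, abs_of_nonneg (by linarith [h1.2, h2.1])]
  linarith [h1.2, h2.1]

lemma Phi_mkp_pos (n : ℕ) (y : ℕ → Bool) : 0 < Phi (mkp n y) :=
  lt_of_lt_of_le (by positivity) (Phi_mkp_mem n y).1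

lemma Phi_inj : Function.Injective Phi := by
  intro a b hab
  rcases Phi_cases a with ha | ⟨n, y, ha⟩ <;> rcases Phi_cases b with hb | ⟨m, w, hb⟩
  · rw [ha, hb]
  · exfalso
    rw [ha, hb, Phi_allTrue] at hab
    exact absurd hab.symm (Phi_mkp_pos m w).ne'
  · exfalso
    rw [ha, hb, Phi_allTrue] at hab
    exact absurd hab (Phi_mkp_pos n y).ne'
  · subst ha hb
    by_cases hnm : n = m
    · subst hnm
      rw [Phi_mkp, Phi_mkp] at hab
      have hy : Gv (rr n) y = Gv (rr n) w := by
        have hp : (0:ℝ) < (4:ℝ)⁻¹ ^ n := by positivity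
        have := mul_left_cancel₀ hp.ne' hab
        linarith
      rw [Gv_inj (rr_ge n) (rr_lt n) hy]
    · exfalso
      have := Phi_mkp_ne n m hnm y w
      rw [hab, sub_self, abs_zero] at this
      nlinarith [pow_pos (show (0:ℝ) < 4⁻¹ by norm_num) (min n m)]

-- the cylinder estimate
lemma Phi_cyl (k : ℕ) (x z : ℕ → Bool) (h : ∀ i < k, z i = x i) :
    |Phi z - Phi x| ≤ 2 * ((2:ℝ)⁻¹) ^ k := by
  have h2 : (0:ℝ) < (2:ℝ)⁻¹ := by norm_num
  -- case analysis
  rcases Phi_cases x with hx | ⟨n, y, hx⟩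
  case inl =>
    -- x all true; z agrees below k so z is allTrue or mkp n with n ≥ k
    have hzb : 0 ≤ Phi z ∧ Phi z ≤ 2 * ((2:ℝ)⁻¹)^k := by
      constructor
      · exact Phi_nonneg z
      · rcases Phi_cases z with hz | ⟨m, w, hz⟩
        · rw [hz, Phi_allTrue]; positivity
        · have hmk : k ≤ m := by
            by_contra hc
            push_neg at hc
            have := h m hc
            rw [hz, hx, mkp_self] at this
            simp at this
          rw [hz]
          calc Phi (mkp m w) ≤ 2 * (4:ℝ)⁻¹ ^ m := (Phi_mkp_mem m w).2
            _ ≤ 2 * (2:ℝ)⁻¹ ^ m := by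
                have : (4:ℝ)⁻¹ ^ m ≤ (2:ℝ)⁻¹ ^ m := by
                  apply pow_le_pow_left₀ (by norm_num) (by norm_num)
                linarith
            _ ≤ 2 * (2:ℝ)⁻¹ ^ k := by
                have : (2:ℝ)⁻¹ ^ m ≤ (2:ℝ)⁻¹ ^ k := pow_le_pow_of_le_one (by norm_num) (by norm_num) hmk
                linarith
    rw [hx, Phi_allTrue, sub_zero, abs_of_nonneg hzb.1]
    exact hzb.2
  case inr =>
    rcases lt_or_ge n k with hnk | hnk
    · -- z also in piece n, with tail agreeing below k - n - 1
      have hz : z = mkp n (fun i => z (n+1+i)) := by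
        rcases Phi_cases z with hz | ⟨m, w, hz⟩
        · exfalso
          have := h n hnk
          rw [hz, hx, mkp_self] at this
          simp at this
        · have hmn : m = n := by
            by_contra hc
            rcases lt_or_gt_of_ne hc with hlt | hgt
            · have := h m (by omega)
              rw [hz, hx, mkp_self, mkp_lt y hlt] at this
              simp at this
            · have := h n hnk
              rw [hz, hx, mkp_self, mkp_lt w hgt] at this
              simp at this
          subst hmn
          rw [hz]
          funext i
          rcases lt_trichotomy i m with hi | hi | hi
          · rw [mkp_lt w hi, mkp_lt _ hi]
          · rw [hi, mkp_self, mkp_self]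
          · rw [mkp_gt w hi, mkp_gt _ hi]
            rw [mkp_gt w (by omega)]
            congr 1
            omega
      rw [hx, hz, Phi_mkp, Phi_mkp]
      have htail : |Gv (rr n) (fun i => z (n+1+i)) - Gv (rr n) y| ≤ (rr n) ^ (k - n - 1) := by
        apply Gv_tail_bound (rr_pos n).le (rr_lt n)
        intro i hi
        have hzx := h (n+1+i) (by omega)
        rw [hx, mkp_gt y (by omega)] at hzx
        rw [hzx]
        congr 1
        omega
      have : (4:ℝ)⁻¹ ^ n * (1 + Gv (rr n) (fun i => z (n+1+i))) - (4:ℝ)⁻¹ ^ n * (1 + Gv (rr n) y)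
          = (4:ℝ)⁻¹ ^ n * (Gv (rr n) (fun i => z (n+1+i)) - Gv (rr n) y) := by ring
      rw [this, abs_mul, abs_of_nonneg (by positivity : (0:ℝ) ≤ (4:ℝ)⁻¹ ^ n)]
      have hrr2 : rr n ≤ (2:ℝ)⁻¹ := by
        have := rr_lt n
        norm_num
        linarith
      have hstep1 : (4:ℝ)⁻¹ ^ n * |Gv (rr n) (fun i => z (n+1+i)) - Gv (rr n) y|
          ≤ (4:ℝ)⁻¹ ^ n * ((2:ℝ)⁻¹) ^ (k - n - 1) := by
        apply mul_le_mul_of_nonneg_left _ (by positivity)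
        calc |Gv (rr n) (fun i => z (n+1+i)) - Gv (rr n) y| ≤ (rr n) ^ (k - n - 1) := htail
          _ ≤ ((2:ℝ)⁻¹) ^ (k - n - 1) := pow_le_pow_left₀ (rr_pos n).le hrr2 _
      have e : (4:ℝ)⁻¹^n * (2:ℝ)⁻¹^(k-n-1) = (2:ℝ)⁻¹ ^ (n + n + (k-n-1)) := by
        have e2 : (4:ℝ)⁻¹ = (2:ℝ)⁻¹ * 2⁻¹ := by norm_num
        rw [pow_add, pow_add, e2, mul_pow]
      have hexp : k ≤ (n + n + (k-n-1)) + 1 := by omega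
      have hle2 : (2:ℝ)⁻¹ ^ (n+n+(k-n-1)) * (2:ℝ)⁻¹ ≤ (2:ℝ)⁻¹ ^ k := by
        rw [← pow_succ]
        exact pow_le_pow_of_le_one (by norm_num) (by norm_num) hexp
      rw [e] at hstep1
      calc (4:ℝ)⁻¹ ^ n * |Gv (rr n) (fun i => z (n+1+i)) - Gv (rr n) y|
          ≤ (2:ℝ)⁻¹ ^ (n + n + (k-n-1)) := hstep1
        _ ≤ 2 * (2:ℝ)⁻¹ ^ k := by linarith
    · -- n ≥ k: both Phi x, Phi z in [0, 2 * 4⁻¹^k]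
      have hb : ∀ u : ℕ → Bool, (∀ i < k, u i = true) → 0 ≤ Phi u ∧ Phi u ≤ 2 * ((2:ℝ)⁻¹)^k := by
        intro u hu
        refine ⟨Phi_nonneg u, ?_⟩
        rcases Phi_cases u with hz | ⟨m, w, hz⟩
        · rw [hz, Phi_allTrue]; positivity
        · have hmk : k ≤ m := by
            by_contra hc
            push_neg at hc
            have := hu m hc
            rw [hz, mkp_self] at this
            simp at this
          rw [hz]
          calc Phi (mkp m w) ≤ 2 * (4:ℝ)⁻¹ ^ m := (Phi_mkp_mem m w).2
            _ ≤ 2 * (2:ℝ)⁻¹ ^ m := by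
                have : (4:ℝ)⁻¹ ^ m ≤ (2:ℝ)⁻¹ ^ m := by
                  apply pow_le_pow_left₀ (by norm_num) (by norm_num)
                linarith
            _ ≤ 2 * (2:ℝ)⁻¹ ^ k := by
                have : (2:ℝ)⁻¹ ^ m ≤ (2:ℝ)⁻¹ ^ k := pow_le_pow_of_le_one (by norm_num) (by norm_num) hmk
                linarith
      have hxtrue : ∀ i < k, x i = true := by
        intro i hi
        rw [hx, mkp_lt y (by omega : i < n)]
      have hztrue : ∀ i < k, z i = true := by
        intro i hi
        rw [h i hi]
        exact hxtrue i hi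
      have h1 := hb x hxtrue
      have h2 := hb z hztrue
      rw [abs_sub_le_iff]
      constructor <;> linarith [h1.1, h1.2, h2.1, h2.2]

lemma piece_local {z : ℝ} (hz : z ∈ Set.range Phi) (n : ℕ) (y : ℕ → Bool)
    (h : |z - Phi (mkp n y)| < (4:ℝ)⁻¹^n / 4) : ∃ w', z = Phi (mkp n w') := by
  obtain ⟨u, rfl⟩ := hz
  rcases Phi_cases u with hu | ⟨m, w, hu⟩
  · exfalso
    rw [hu, Phi_allTrue, zero_sub, abs_neg,
      abs_of_nonneg (Phi_mkp_pos n y).le] at h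
    have h1 := (Phi_mkp_mem n y).1
    have hp : (0:ℝ) < (4:ℝ)⁻¹ ^ n := by positivity
    linarith
  · subst hu
    by_cases hmn : m = n
    · subst hmn
      exact ⟨w, rfl⟩
    · exfalso
      have hsep := Phi_mkp_ne m n hmn w y
      have hminn : (4:ℝ)⁻¹ ^ n ≤ (4:ℝ)⁻¹ ^ (min m n) :=
        pow_le_pow_of_le_one (by norm_num) (by norm_num) (min_le_right m n)
      have hp : (0:ℝ) < (4:ℝ)⁻¹ ^ n := by positivity
      linarith

lemma cyl_mem_nhds (x : ℕ → Bool) (k : ℕ) : {z : ℕ → Bool | ∀ i < k, z i = x i} ∈ nhds x := by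
  have : {z : ℕ → Bool | ∀ i < k, z i = x i} = Set.pi (↑(Finset.range k)) (fun i => {x i}) := by
    ext z
    simp [Set.mem_pi, Finset.mem_range]
  rw [this]
  apply IsOpen.mem_nhds
  · exact isOpen_set_pi (Finset.range k).finite_toSet (fun i _ => isOpen_discrete _)
  · simp [Set.mem_pi]

lemma Phi_continuous : Continuous Phi := by
  rw [continuous_iff_continuousAt]
  intro x
  rw [ContinuousAt, Metric.tendsto_nhds]
  intro ε hε
  obtain ⟨k, hk⟩ := exists_pow_lt_of_lt_one (show (0:ℝ) < ε/2 by linarith) (show (2:ℝ)⁻¹ < 1 by norm_num)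
  filter_upwards [cyl_mem_nhds x k] with z hz
  rw [Real.dist_eq]
  calc |Phi z - Phi x| ≤ 2 * ((2:ℝ)⁻¹)^k := Phi_cyl k x z hz
    _ < ε := by linarith




lemma range_dense {a b : ℝ} (ha : 0 < a) (hab : a ≤ b/2) (hb : b ≤ 2) :
    ∃ x : ℕ → Bool, a ≤ Phi x ∧ Phi x ≤ b := by
  classical
  have hb0 : 0 < b := by linarith
  have hex : ∃ k : ℕ, (4:ℝ)⁻¹ ^ k ≤ b := by
    obtain ⟨k, hk⟩ := exists_pow_lt_of_lt_one hb0 (show (4:ℝ)⁻¹ < 1 by norm_num)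
    exact ⟨k, hk.le⟩
  set k := Nat.find hex with hkdef
  have hspec : (4:ℝ)⁻¹ ^ k ≤ b := Nat.find_spec hex
  rcases le_or_gt a ((4:ℝ)⁻¹ ^ k) with hak | hak
  · refine ⟨mkp k (fun _ => false), ?_, ?_⟩
    · rw [Phi_mkp, Gv_false]
      linarith [hak]
    · rw [Phi_mkp, Gv_false]
      linarith [hspec]
  · -- a > 4⁻¹^k ; then k ≥ 1 and b < 4 * 4⁻¹^k
    have hk1 : 1 ≤ k := by
      by_contra hc
      push_neg at hc
      interval_cases k
      · simp at hak
        linarith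
    have hmin : ¬ ((4:ℝ)⁻¹ ^ (k-1) ≤ b) := Nat.find_min hex (by omega)
    push_neg at hmin
    have hquad : (4:ℝ)⁻¹ ^ (k-1) = 4 * (4:ℝ)⁻¹ ^ k := by
      rw [show k = (k-1) + 1 from by omega, pow_succ, Nat.add_sub_cancel]
      ring
    rw [hquad] at hmin
    refine ⟨mkp k (fun _ => true), ?_, ?_⟩
    · rw [Phi_mkp, Gv_true (rr_pos k).le (rr_lt k)]
      -- Phi = 2 * 4⁻¹^k > b/2 ≥ a
      nlinarith
    · rw [Phi_mkp, Gv_true (rr_pos k).le (rr_lt k)]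
      nlinarith

lemma perfect_step {xv r : ℝ} (hx : xv ∈ range Phi) (hr0 : 0 < r) (hr2 : r < 2) :
    ∃ zv ∈ range Phi, r/8 ≤ |zv - xv| ∧ |zv - xv| ≤ r := by
  classical
  obtain ⟨w, rfl⟩ := hx
  rcases Phi_cases w with hw | ⟨n, y, hw⟩
  · -- xv = 0
    subst hw
    rw [Phi_allTrue]
    obtain ⟨z, hz1, hz2⟩ := range_dense (a := r/8) (b := r) (by linarith)
      (by linarith) (by linarith)
    refine ⟨Phi z, mem_range_self z, ?_, ?_⟩
    · rw [sub_zero, abs_of_nonneg (Phi_nonneg z)]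
      exact hz1
    · rw [sub_zero, abs_of_nonneg (Phi_nonneg z)]
      exact hz2
  · subst hw
    set q : ℝ := (4:ℝ)⁻¹ ^ n with hq
    have hq0 : 0 < q := by positivity
    have hmem := Phi_mkp_mem n y
    have hrn1 : (0:ℝ) ≤ rr n := (rr_pos n).le
    have hrn2 : rr n < 1/2 := rr_lt n
    have hrn3 : (1:ℝ)/4 ≤ rr n := rr_ge n
    rcases le_or_gt r q with hrq | hrq
    · -- flip a digit
      set s : ℝ := r / q with hs
      have hs0 : 0 < s := by positivity
      have hs1 : s ≤ 1 := by
        rw [hs, div_le_one hq0]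
        exact hrq
      have hex : ∃ k : ℕ, (1 - rr n) * (rr n)^k ≤ s := by
        obtain ⟨k, hk⟩ := exists_pow_lt_of_lt_one (show (0:ℝ) < s / (1 - rr n) by
            apply div_pos hs0
            linarith) (show rr n < 1 by linarith)
        refine ⟨k, ?_⟩
        rw [div_eq_mul_inv] at hk
        have h1rn : (0:ℝ) < 1 - rr n := by linarith
        calc (1 - rr n) * (rr n)^k ≤ (1 - rr n) * (s * (1 - rr n)⁻¹) :=
              mul_le_mul_of_nonneg_left hk.le h1rn.le
          _ = s := by field_simp
      set k := Nat.find hex with hkdef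
      have hspec : (1 - rr n) * (rr n)^k ≤ s := Nat.find_spec hex
      have hlow : s/4 ≤ (1 - rr n) * (rr n)^k := by
        rcases Nat.eq_zero_or_pos k with hk0 | hk0
        · rw [hk0, pow_zero, mul_one]
          linarith
        · have hmin : ¬ ((1 - rr n) * (rr n)^(k-1) ≤ s) := Nat.find_min hex (by omega)
          push_neg at hmin
          have : (rr n) * ((1 - rr n) * (rr n)^(k-1)) = (1 - rr n) * (rr n)^k := by
            rw [show k = (k-1)+1 from by omega, pow_succ, Nat.add_sub_cancel]
            ring
          nlinarith [hmin, rr_ge n, rr_pos n]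
      refine ⟨Phi (mkp n (Function.update y k (!y k))), mem_range_self _, ?_⟩
      · rw [Phi_mkp, Phi_mkp]
        have e : (4:ℝ)⁻¹ ^ n * (1 + Gv (rr n) (Function.update y k (!y k))) -
            (4:ℝ)⁻¹ ^ n * (1 + Gv (rr n) y)
            = -((4:ℝ)⁻¹^n * (Gv (rr n) y - Gv (rr n) (Function.update y k (!y k)))) := by ring
        rw [e, abs_neg, abs_mul, abs_of_nonneg (le_of_lt hq0), Gv_flip hrn1 hrn2]
        have hsq : s * q = r := by
          rw [hs]
          field_simp
        constructor
        · nlinarith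
        · nlinarith
    · rcases lt_or_ge r (2*q) with hr2q | hr2q
      · -- use an endpoint of the piece
        rcases le_or_gt ((3/2) * q) (Phi (mkp n y)) with hxx | hxx
        · refine ⟨Phi (mkp n (fun _ => false)), mem_range_self _, ?_⟩
          · rw [Phi_mkp, Gv_false]
            rw [abs_of_nonpos (by nlinarith [hmem.1])]
            constructor
            · nlinarith [hmem.1, hmem.2]
            · nlinarith [hmem.1, hmem.2]
        · refine ⟨Phi (mkp n (fun _ => true)), mem_range_self _, ?_⟩
          · rw [Phi_mkp, Gv_true hrn1 hrn2]
            rw [abs_of_nonneg (by nlinarith [hmem.2])]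
            constructor
            · nlinarith [hmem.1, hmem.2]
            · nlinarith [hmem.1, hmem.2]
      · -- r ≥ 2q so Phi ≤ r
        rcases le_or_gt (r/4) (Phi (mkp n y)) with hx4 | hx4
        · refine ⟨Phi (fun _ => true), mem_range_self _, ?_⟩
          · rw [Phi_allTrue]
            rw [abs_of_nonpos (by linarith [Phi_nonneg (mkp n y)])]
            constructor
            · linarith [hx4]
            · have := hmem.2
              nlinarith
        · rcases le_or_gt (Phi (mkp n y) + r) 2 with hsum | hsum
          · obtain ⟨z, hz1, hz2⟩ := range_dense
              (show (0:ℝ) < Phi (mkp n y) + r/8 by nlinarith [Phi_nonneg (mkp n y)])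
              (by nlinarith [hmem.1, hq0]) hsum
            refine ⟨Phi z, mem_range_self _, ?_⟩
            · rw [abs_of_nonneg (by linarith)]
              constructor
              · linarith
              · linarith
          · refine ⟨Phi (mkp 0 (fun _ => true)), mem_range_self _, ?_⟩
            · rw [Phi_mkp]
              rw [show ((4:ℝ)⁻¹ ^ (0:ℕ) * (1 + Gv (rr 0) (fun _ => true))) = 2 from by
                rw [Gv_true (rr_pos 0).le (rr_lt 0)]; norm_num]
              rw [abs_of_nonneg (by linarith [Phi_le_two (mkp n y)])]
              constructor
              · linarith
              · linarith




lemma real_subset_doubling (S : Set ℝ) : IsDoubling ↥S := by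
  classical
  refine ⟨4, ?_⟩
  intro x r
  rcases le_or_gt r 0 with hr | hr
  · refine ⟨{x}, by simp, ?_⟩
    intro z hz
    simp only [Finset.mem_singleton, Set.mem_iUnion]
    refine ⟨x, by simp, ?_⟩
    rw [Metric.mem_closedBall] at hz ⊢
    linarith
  · set I : ℕ → Set ℝ := fun j => Set.Icc (x.1 - r + j*(r/2)) (x.1 - r + j*(r/2) + r/2) with hI
    set g : ℕ → ↥S := fun j =>
      if h : ∃ y : ↥S, (y:ℝ) ∈ I j then h.choose else x with hg
    refine ⟨(Finset.range 4).image g, le_trans Finset.card_image_le (by simp), ?_⟩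
    intro z hz
    rw [Metric.mem_closedBall, Subtype.dist_eq, Real.dist_eq, abs_le] at hz
    -- find j
    set u : ℝ := z.1 - (x.1 - r) with hu
    have hu0 : 0 ≤ u := by rw [hu]; linarith [hz.1]
    have hu2 : u ≤ 2*r := by rw [hu]; linarith [hz.2]
    set j : ℕ := min (⌊u / (r/2)⌋₊) 3 with hj
    have hzj : z.1 ∈ I j := by
      rw [hI]
      simp only [Set.mem_Icc]
      have hr2 : (0:ℝ) < r/2 := by linarith
      constructor
      · -- j * (r/2) ≤ u
        have h1 : (j:ℝ) ≤ u / (r/2) := by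
          calc (j:ℝ) ≤ (⌊u / (r/2)⌋₊ : ℝ) := by
                have : j ≤ ⌊u / (r/2)⌋₊ := min_le_left _ _
                exact_mod_cast this
            _ ≤ u / (r/2) := Nat.floor_le (by positivity)
        have h4 : (j:ℝ) * (r/2) ≤ u := (le_div_iff₀ hr2).mp h1
        rw [hu] at h4
        linarith
      · -- u ≤ (j+1) * (r/2)
        have h2 : u ≤ ((j:ℝ)+1) * (r/2) := by
          rcases le_or_gt (⌊u / (r/2)⌋₊) 3 with hc | hc
          · have hjeq : j = ⌊u / (r/2)⌋₊ := min_eq_left hc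
            have := Nat.lt_floor_add_one (u / (r/2))
            rw [← hjeq] at this
            have h3 : u / (r/2) < (j:ℝ) + 1 := by exact_mod_cast this
            rw [div_lt_iff₀ (by linarith)] at h3
            linarith
          · have hjeq : j = 3 := min_eq_right (by omega)
            rw [hjeq]
            norm_num
            linarith
        rw [hu] at h2
        linarith
    have hne : ∃ y : ↥S, (y:ℝ) ∈ I j := ⟨z, hzj⟩
    refine Set.mem_iUnion.mpr ⟨g j, Set.mem_iUnion.mpr ⟨Finset.mem_image_of_mem g (by
      simp only [Finset.mem_range]
      omega), ?_⟩⟩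
    rw [Metric.mem_closedBall, Subtype.dist_eq, Real.dist_eq]
    have hgj : (g j : ℝ) ∈ I j := by
      rw [hg]
      simp only [dif_pos hne]
      exact hne.choose_spec
    rw [hI] at hzj hgj
    simp only [Set.mem_Icc] at hzj hgj
    rw [abs_le]
    constructor <;> linarith [hzj.1, hzj.2, hgj.1, hgj.2]




lemma third1 : (0:ℝ) ≤ 1/3 := by norm_num
lemma third2 : (1:ℝ)/3 < 1/2 := by norm_num


lemma Gv_shift {r : ℝ} (hr1 : (0:ℝ) ≤ r) (hr2 : r < 1/2) (x : ℕ → Bool) :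
    Gv r x = (if x 0 then (1:ℝ) else 0) * (1-r) + r * Gv r (fun i => x (i+1)) := by
  have hx : x = bcons (x 0) (fun i => x (i+1)) := by
    funext i
    rcases Nat.eq_zero_or_pos i with h0 | h0
    · simp [bcons, h0]
    · simp only [bcons, if_neg (by omega : ¬ i = 0)]
      congr 1
      omega
  conv_lhs => rw [hx]
  exact Gv_bcons hr1 hr2 _ _

lemma Gv_continuous {r : ℝ} (hr1 : (0:ℝ) ≤ r) (hr2 : r < 1/2) : Continuous (Gv r) := by
  rw [continuous_iff_continuousAt]
  intro x
  rw [ContinuousAt, Metric.tendsto_nhds]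
  intro ε hε
  obtain ⟨k, hk⟩ := exists_pow_lt_of_lt_one hε (show r < 1 by linarith)
  filter_upwards [cyl_mem_nhds x k] with z hz
  rw [Real.dist_eq]
  exact lt_of_le_of_lt (Gv_tail_bound hr1 hr2 z x k hz) hk

lemma preCantorSet_subset_Icc (n : ℕ) : preCantorSet n ⊆ Icc (0:ℝ) 1 := by
  induction n with
  | zero => simp [preCantorSet]
  | succ n ih =>
    rw [preCantorSet_succ]
    rintro t (⟨u, hu, rfl⟩ | ⟨u, hu, rfl⟩)
    · have := ih hu
      simp only [mem_Icc] at *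
      constructor <;> [linarith [this.1]; linarith [this.2]]
    · have := ih hu
      simp only [mem_Icc] at *
      constructor <;> [linarith [this.1]; linarith [this.2]]

lemma Gv_third_mem_preCantorSet (n : ℕ) (x : ℕ → Bool) : Gv (1/3) x ∈ preCantorSet n := by
  induction n generalizing x with
  | zero =>
    simp only [preCantorSet_zero, mem_Icc]
    exact ⟨Gv_nonneg third1 third2 x, Gv_le_one third1 third2 x⟩
  | succ n ih =>
    rw [preCantorSet_succ]
    rw [Gv_shift third1 third2 x]
    by_cases h : x 0
    · right
      refine ⟨Gv (1/3) (fun i => x (i+1)), ih _, ?_⟩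
      simp only [h, if_true]
      ring
    · left
      refine ⟨Gv (1/3) (fun i => x (i+1)), ih _, ?_⟩
      rw [if_neg h]
      ring

lemma Gv_third_mem_cantorSet (x : ℕ → Bool) : Gv (1/3) x ∈ cantorSet :=
  Set.mem_iInter.mpr (fun n => Gv_third_mem_preCantorSet n x)

-- surjectivity machinery
def gmap (t : ℝ) : ℝ := if t ≤ 1/2 then 3*t else 3*t - 2

lemma gmap_mem {t : ℝ} (ht : t ∈ cantorSet) : gmap t ∈ cantorSet := by
  rw [gmap]
  split_ifs with h
  · -- t ≤ 1/2, show 3t ∈ cantorSet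
    rw [cantorSet, Set.mem_iInter] at ht ⊢
    intro n
    have hn := ht (n+1)
    rw [preCantorSet_succ] at hn
    rcases hn with ⟨u, hu, he⟩ | ⟨u, hu, he⟩
    · have he' : u / 3 = t := he
      have : (3:ℝ) * t = u := by rw [← he']; ring
      rw [this]
      exact hu
    · exfalso
      have he' : (2 + u)/3 = t := he
      have hu01 := preCantorSet_subset_Icc n hu
      simp only [mem_Icc] at hu01
      have : (2 + u)/3 > 1/2 := by linarith [hu01.1]
      rw [he'] at this
      linarith
  · push_neg at h
    rw [cantorSet, Set.mem_iInter] at ht ⊢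
    intro n
    have hn := ht (n+1)
    rw [preCantorSet_succ] at hn
    rcases hn with ⟨u, hu, he⟩ | ⟨u, hu, he⟩
    · exfalso
      have he' : u / 3 = t := he
      have hu01 := preCantorSet_subset_Icc n hu
      simp only [mem_Icc] at hu01
      have : u/3 ≤ 1/2 := by linarith [hu01.2]
      rw [he'] at this
      linarith
    · have he' : (2 + u)/3 = t := he
      have : (3:ℝ) * t - 2 = u := by rw [← he']; ring
      rw [this]
      exact hu

lemma gmap_iter_mem {t : ℝ} (ht : t ∈ cantorSet) (n : ℕ) : gmap^[n] t ∈ cantorSet := by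
  induction n with
  | zero => simpa using ht
  | succ n ih =>
    rw [Function.iterate_succ_apply']
    exact gmap_mem ih

lemma cantor_partial_sum {t : ℝ} (ht : t ∈ cantorSet) (n : ℕ) :
    t = (∑ i ∈ Finset.range n,
        (if (1/2 : ℝ) < gmap^[i] t then (1:ℝ) else 0) * ((1 - 1/3) * (1/3)^i))
      + gmap^[n] t * (1/3)^n := by
  induction n with
  | zero => simp
  | succ n ih =>
    rw [Finset.sum_range_succ, Function.iterate_succ_apply']
    set s := gmap^[n] t with hs
    have hsc : s ∈ cantorSet := gmap_iter_mem ht n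
    rcases le_or_gt s (1/2) with hle | hgt
    · rw [if_neg (by linarith), gmap, if_pos hle]
      conv_lhs => rw [ih]
      rw [pow_succ]
      ring
    · rw [if_pos hgt, gmap, if_neg (by linarith)]
      conv_lhs => rw [ih]
      rw [pow_succ]
      ring

lemma Gv_third_surj {t : ℝ} (ht : t ∈ cantorSet) :
    ∃ x : ℕ → Bool, Gv (1/3) x = t := by
  classical
  refine ⟨fun n => decide ((1/2:ℝ) < gmap^[n] t), ?_⟩
  set x : ℕ → Bool := fun n => decide ((1/2:ℝ) < gmap^[n] t) with hx
  have hsum := (Gsummable third1 third2 x).hasSum.tendsto_sum_nat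
  have hterm : ∀ i, (if x i then (1:ℝ) else 0) * ((1 - 1/3) * (1/3)^i)
      = (if (1/2:ℝ) < gmap^[i] t then (1:ℝ) else 0) * ((1 - 1/3) * (1/3)^i) := by
    intro i
    rw [hx]
    by_cases h : (1/2:ℝ) < gmap^[i] t <;> simp [h]
  have hS : ∀ n, ∑ i ∈ Finset.range n, (if x i then (1:ℝ) else 0) * ((1 - 1/3) * (1/3)^i)
      = t - gmap^[n] t * (1/3)^n := by
    intro n
    have := cantor_partial_sum ht n
    rw [Finset.sum_congr rfl (fun i _ => hterm i)]
    linarith [this]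
  have htend2 : Filter.Tendsto (fun n : ℕ => t - gmap^[n] t * (1/3)^n)
      Filter.atTop (nhds t) := by
    have h0 : Filter.Tendsto (fun n : ℕ => gmap^[n] t * (1/3)^n) Filter.atTop (nhds 0) := by
      apply squeeze_zero_norm (a := fun n : ℕ => (1/3:ℝ)^n)
      · intro n
        have hmem := cantorSet_subset_unitInterval (gmap_iter_mem ht n)
        simp only [mem_Icc] at hmem
        rw [Real.norm_eq_abs, abs_mul, abs_of_nonneg hmem.1,
          abs_of_nonneg (by positivity : (0:ℝ) ≤ (1/3:ℝ)^n)]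
        nlinarith [pow_nonneg (show (0:ℝ) ≤ 1/3 by norm_num) n, hmem.2]
      · exact tendsto_pow_atTop_nhds_zero_of_lt_one (by norm_num) (by norm_num)
    have := Filter.Tendsto.sub (tendsto_const_nhds (x := t) (f := Filter.atTop (α := ℕ))) h0
    simpa using this
  have : Filter.Tendsto (fun n => ∑ i ∈ Finset.range n,
      (if x i then (1:ℝ) else 0) * ((1 - 1/3) * (1/3)^i)) Filter.atTop (nhds t) := by
    rw [show (fun n => ∑ i ∈ Finset.range n,
      (if x i then (1:ℝ) else 0) * ((1 - 1/3) * (1/3)^i)) = fun n => t - gmap^[n] t * (1/3)^n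
      from funext hS]
    exact htend2
  exact tendsto_nhds_unique hsum this




lemma Phi_mkp_sub (n : ℕ) (y w : ℕ → Bool) :
    Phi (mkp n y) - Phi (mkp n w) = (4:ℝ)⁻¹^n * (Gv (rr n) y - Gv (rr n) w) := by
  rw [Phi_mkp, Phi_mkp]
  ring

lemma chain_main (n : ℕ) (hn : 2 ≤ n) (δ : ℝ) (hδ : 6/((n:ℝ)+2) ≤ δ) :
    ∃ c : ℕ → (ℕ → Bool), (∀ j, ∃ y, c j = mkp n y) ∧
      (∀ i, 1 ≤ i → i ≤ n+2 →
        |Phi (c i) - Phi (c (i-1))| ≤ δ * |Phi (c 0) - Phi (c (n+2))|) ∧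
      Phi (c (n+2)) ≠ Phi (c 0) := by
  classical
  set ε : ℝ := 1/((n:ℝ)+2) with hε
  have hnr : (0:ℝ) < (n:ℝ) + 2 := by positivity
  have hε0 : 0 < ε := by positivity
  have hε4 : ε ≤ 1/4 := by
    rw [hε]
    apply one_div_le_one_div_of_le (by norm_num)
    have : (2:ℝ) ≤ (n:ℝ) := by exact_mod_cast hn
    linarith
  have hu : ∀ j : ℕ, ((min j (n+2) : ℕ) : ℝ) * ε ∈ Icc (0:ℝ) 1 := by
    intro j
    constructor
    · positivity
    · have h1 : ((min j (n+2) : ℕ) : ℝ) ≤ ((n:ℝ)+2) := by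
        have : (min j (n+2)) ≤ n + 2 := min_le_right _ _
        have h2 : ((min j (n+2) : ℕ) : ℝ) ≤ ((n+2 : ℕ) : ℝ) := by exact_mod_cast this
        rw [Nat.cast_add] at h2
        simpa using h2
      rw [hε]
      rw [mul_one_div, div_le_one hnr]
      exact h1
  set y : ℕ → (ℕ → Bool) := fun j => (Gv_dense (rr_ge n) (rr_lt n) _ (hu j)).choose with hy
  have hyspec : ∀ j, |Gv (rr n) (y j) - ((min j (n+2) : ℕ) : ℝ) * ε| ≤ ε := by
    intro j
    have h3 := (Gv_dense (rr_ge n) (rr_lt n) _ (hu j)).choose_spec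
    calc |Gv (rr n) (y j) - ((min j (n+2) : ℕ) : ℝ) * ε| ≤ 1 - 2 * rr n := h3
      _ = ε := by rw [one_sub_two_rr, hε]
  refine ⟨fun j => mkp n (y j), fun j => ⟨y j, rfl⟩, ?_, ?_⟩
  · intro i h1 h2
    have hq : (0:ℝ) < (4:ℝ)⁻¹^n := by positivity
    have egoal : |Phi (mkp n (y i)) - Phi (mkp n (y (i-1)))|
        = (4:ℝ)⁻¹^n * |Gv (rr n) (y i) - Gv (rr n) (y (i-1))| := by
      rw [Phi_mkp_sub, abs_mul, abs_of_nonneg hq.le]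
    have egoal2 : |Phi (mkp n (y 0)) - Phi (mkp n (y (n+2)))|
        = (4:ℝ)⁻¹^n * |Gv (rr n) (y 0) - Gv (rr n) (y (n+2))| := by
      rw [Phi_mkp_sub, abs_mul, abs_of_nonneg hq.le]
    rw [egoal, egoal2]
    -- end separation
    have hend : 1 - 2*ε ≤ |Gv (rr n) (y 0) - Gv (rr n) (y (n+2))| := by
      have e0 : ((min 0 (n+2) : ℕ) : ℝ) * ε = 0 := by simp
      have eN : ((min (n+2) (n+2) : ℕ) : ℝ) * ε = 1 := by
        simp only [min_self]
        rw [hε, Nat.cast_add]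
        push_cast
        field_simp
      have h0 := hyspec 0
      have hN := hyspec (n+2)
      rw [e0] at h0
      rw [eN] at hN
      rw [abs_le] at h0 hN
      rw [le_abs]
      right
      have := h0.2
      have := hN.1
      simp only [sub_zero] at h0
      linarith [h0.1, h0.2, hN.1, hN.2]
    -- step bound
    have hstep : |Gv (rr n) (y i) - Gv (rr n) (y (i-1))| ≤ 3 * ε := by
      have hui : ((min i (n+2) : ℕ) : ℝ) * ε - ((min (i-1) (n+2) : ℕ) : ℝ) * ε = ε := by
        have e1 : (min i (n+2)) = (min (i-1) (n+2)) + 1 := by omega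
        rw [e1]
        push_cast
        ring
      have hi := hyspec i
      have hi1 := hyspec (i-1)
      rw [abs_le] at hi hi1
      rw [abs_le]
      constructor <;> linarith [hi.1, hi.2, hi1.1, hi1.2, hui]
    calc (4:ℝ)⁻¹^n * |Gv (rr n) (y i) - Gv (rr n) (y (i-1))| ≤ (4:ℝ)⁻¹^n * (3*ε) :=
          mul_le_mul_of_nonneg_left hstep hq.le
      _ ≤ δ * ((4:ℝ)⁻¹^n * |Gv (rr n) (y 0) - Gv (rr n) (y (n+2))|) := by
          have h6 : 6 * ε ≤ δ := by
            rw [hε]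
            rw [show (6:ℝ) * (1/((n:ℝ)+2)) = 6/((n:ℝ)+2) from by ring]
            exact hδ
          have hhalf : 1/2 ≤ |Gv (rr n) (y 0) - Gv (rr n) (y (n+2))| := by linarith
          have hδ0 : (0:ℝ) ≤ δ := le_trans (by positivity) hδ
          calc (4:ℝ)⁻¹^n * (3*ε) = (6*ε) * ((4:ℝ)⁻¹^n * (1/2)) := by ring
            _ ≤ δ * ((4:ℝ)⁻¹^n * (1/2)) := mul_le_mul_of_nonneg_right h6 (by positivity)
            _ ≤ δ * ((4:ℝ)⁻¹^n * |Gv (rr n) (y 0) - Gv (rr n) (y (n+2))|) :=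
                mul_le_mul_of_nonneg_left (mul_le_mul_of_nonneg_left hhalf hq.le) hδ0
  · intro hcon
    have h1 : Phi (mkp n (y (n+2))) - Phi (mkp n (y 0)) = 0 := by rw [hcon]; ring
    rw [Phi_mkp_sub] at h1
    have hq : (0:ℝ) < (4:ℝ)⁻¹^n := by positivity
    have h2 : Gv (rr n) (y (n+2)) - Gv (rr n) (y 0) = 0 := by
      rcases mul_eq_zero.mp h1 with h | h
      · exact absurd h hq.ne'
      · exact h
    have hend : 1 - 2*ε ≤ |Gv (rr n) (y 0) - Gv (rr n) (y (n+2))| := by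
      have e0 : ((min 0 (n+2) : ℕ) : ℝ) * ε = 0 := by simp
      have eN : ((min (n+2) (n+2) : ℕ) : ℝ) * ε = 1 := by
        simp only [min_self]
        rw [hε, Nat.cast_add]
        push_cast
        field_simp
      have h0 := hyspec 0
      have hN := hyspec (n+2)
      rw [e0] at h0
      rw [eN] at hN
      rw [abs_le] at h0 hN
      rw [le_abs]
      right
      simp only [sub_zero] at h0
      linarith [h0.1, h0.2, hN.1, hN.2]
    rw [show Gv (rr n) (y 0) - Gv (rr n) (y (n+2)) = -(Gv (rr n) (y (n+2)) - Gv (rr n) (y 0)) from by ring,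
      h2] at hend
    simp at hend
    linarith

-- the uniform disconnectedness argument within a piece
lemma piece_chain_trivial (n : ℕ) (N : ℕ) (y : ℕ → (ℕ → Bool))
    (hchain : ∀ i, 1 ≤ i → i ≤ N →
      |Phi (mkp n (y i)) - Phi (mkp n (y (i-1)))| ≤
        (1/(2*((n:ℝ)+2))) * |Phi (mkp n (y 0)) - Phi (mkp n (y N))|) :
    ∀ i ≤ N, Phi (mkp n (y i)) = Phi (mkp n (y 0)) := by
  have hq : (0:ℝ) < (4:ℝ)⁻¹^n := by positivity
  have hrn0 : (0:ℝ) ≤ rr n := (rr_pos n).le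
  have hδ : (1:ℝ)/(2*((n:ℝ)+2)) = (1 - 2*rr n)/2 := by
    have hnr : (0:ℝ) < (n:ℝ) + 2 := by positivity
    rw [one_sub_two_rr]
    field_simp
  have h12 : (0:ℝ) < 1 - 2*rr n := by
    rw [one_sub_two_rr]
    positivity
  rcases eq_or_ne (y 0) (y N) with h0N | h0N
  · -- endpoint distance zero: all steps zero
    have hzero : |Phi (mkp n (y 0)) - Phi (mkp n (y N))| = 0 := by
      rw [h0N, sub_self, abs_zero]
    intro i hi
    induction i with
    | zero => rfl
    | succ i ih =>
      have hstep := hchain (i+1) (by omega) hi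
      rw [hzero, mul_zero] at hstep
      have : Phi (mkp n (y (i+1))) = Phi (mkp n (y i)) := by
        have := abs_nonneg (Phi (mkp n (y (i+1))) - Phi (mkp n (y i)))
        have h2 : |Phi (mkp n (y (i+1))) - Phi (mkp n (y i))| = 0 := by
          simpa using le_antisymm hstep this
        have := abs_eq_zero.mp h2
        linarith [this]
      rw [this]
      exact ih (by omega)
  · exfalso
    obtain ⟨i, hi1, hiN, hne, hle⟩ := vchain N y h0N
    have hsep := Gv_sep' hrn0 (rr_lt n) hne
    have hsep0 := Gv_sep' hrn0 (rr_lt n) h0N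
    have hstep := hchain i hi1 hiN
    rw [Phi_mkp_sub, Phi_mkp_sub, abs_mul, abs_mul, abs_of_nonneg hq.le] at hstep
    -- |Gv yi - Gv y(i-1)| ≥ (1-2r) r^(seqV) ≥ (1-2r) r^(seqV y0 yN) ≥ (1-2r)|Gv y0 - Gv yN|
    have hpow : (rr n) ^ (seqV (y 0) (y N)) ≤ (rr n) ^ (seqV (y (i-1)) (y i)) :=
      pow_le_pow_of_le_one hrn0 (by linarith [rr_lt n]) hle
    have hlow : (1 - 2*rr n) * |Gv (rr n) (y 0) - Gv (rr n) (y N)| ≤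
        |Gv (rr n) (y i) - Gv (rr n) (y (i-1))| := by
      calc (1 - 2*rr n) * |Gv (rr n) (y 0) - Gv (rr n) (y N)|
          ≤ (1 - 2*rr n) * (rr n) ^ (seqV (y 0) (y N)) :=
            mul_le_mul_of_nonneg_left hsep0.2 h12.le
        _ ≤ (1 - 2*rr n) * (rr n) ^ (seqV (y (i-1)) (y i)) :=
            mul_le_mul_of_nonneg_left hpow h12.le
        _ ≤ |Gv (rr n) (y (i-1)) - Gv (rr n) (y i)| := hsep.1
        _ = |Gv (rr n) (y i) - Gv (rr n) (y (i-1))| := abs_sub_comm _ _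
    have hpos : 0 < |Gv (rr n) (y 0) - Gv (rr n) (y N)| := by
      rcases lt_or_eq_of_le (abs_nonneg (Gv (rr n) (y 0) - Gv (rr n) (y N))) with h | h
      · exact h
      · exfalso
        have h2 := hsep0.1
        rw [← h] at h2
        nlinarith [pow_pos (rr_pos n) (seqV (y 0) (y N))]
    rw [hδ] at hstep
    have hA1 : (4:ℝ)⁻¹^n * ((1 - 2*rr n) * |Gv (rr n) (y 0) - Gv (rr n) (y N)|) ≤
        (4:ℝ)⁻¹^n * |Gv (rr n) (y i) - Gv (rr n) (y (i-1))| :=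
      mul_le_mul_of_nonneg_left hlow hq.le
    nlinarith [mul_pos hq hpos, h12, hA1, hstep]

lemma chain_const {N : ℕ} (v : ℕ → ℝ)
    (h : ∀ i, 1 ≤ i → i ≤ N → |v i - v (i-1)| ≤ 0) : ∀ i ≤ N, v i = v 0 := by
  intro i hi
  induction i with
  | zero => rfl
  | succ i ih =>
    have hstep := h (i+1) (by omega) hi
    have h2 : |v (i+1) - v i| = 0 := le_antisymm hstep (abs_nonneg _)
    have := abs_eq_zero.mp h2
    have : v (i+1) = v i := by linarith
    rw [this]
    exact ih (by omega)


-- cantorT agrees with Gv (1/3) and gives the homeomorphism to the Cantor set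
def cantorHomeo1 : (ℕ → Bool) ≃ₜ ↥(Set.range Phi) :=
  Continuous.homeoOfEquivCompactToT2
    (f := Equiv.ofBijective (fun x => ⟨Phi x, Set.mem_range_self x⟩)
      ⟨fun a b h => Phi_inj (congrArg Subtype.val h),
       fun z => by
        obtain ⟨w, hw⟩ := z.2
        exact ⟨w, Subtype.ext hw⟩⟩)
    (Continuous.subtype_mk Phi_continuous _)

def cantorHomeo2 : (ℕ → Bool) ≃ₜ ↥cantorSet :=
  Continuous.homeoOfEquivCompactToT2
    (f := Equiv.ofBijective (fun x => ⟨Gv (1/3) x, Gv_third_mem_cantorSet x⟩)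
      ⟨fun a b h => Gv_inj (by norm_num) (by norm_num) (congrArg Subtype.val h),
       fun z => by
        obtain ⟨x, hx⟩ := Gv_third_surj z.2
        exact ⟨x, Subtype.ext hx⟩⟩)
    (Continuous.subtype_mk (Gv_continuous (by norm_num) (by norm_num)) _)

lemma distXX (a b : ↥(Set.range Phi)) : dist a b = |(a:ℝ) - (b:ℝ)| := by
  rw [Subtype.dist_eq, Real.dist_eq]

lemma diamXX : Metric.diam (Set.univ : Set ↥(Set.range Phi)) ≤ 2 := by
  apply Metric.diam_le_of_forall_dist_le (by norm_num)
  rintro a - b -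
  rw [distXX]
  obtain ⟨wa, hwa⟩ := a.2
  obtain ⟨wb, hwb⟩ := b.2
  rw [← hwa, ← hwb, abs_le]
  constructor <;>
    linarith [Phi_nonneg wa, Phi_le_two wa, Phi_nonneg wb, Phi_le_two wb]

lemma XX_UP : IsUniformlyPerfect ↥(Set.range Phi) := by
  refine ⟨1/8, by norm_num, by norm_num, ?_⟩
  intro x r hr0 hrdiam
  have hr2 : r < 2 := lt_of_lt_of_le hrdiam diamXX
  obtain ⟨zv, hzv, hz1, hz2⟩ := perfect_step x.2 hr0 hr2
  refine ⟨⟨zv, hzv⟩, ?_, ?_⟩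
  · rw [Metric.mem_closedBall, distXX]
    exact hz2
  · rw [Metric.mem_ball, distXX]
    push_neg
    calc (1:ℝ)/8 * r = r/8 := by ring
      _ ≤ |zv - (x:ℝ)| := hz1

lemma nat_choice_bound (δ : ℝ) (hδ0 : 0 < δ) (n : ℕ) (hn : ⌈6/δ⌉₊ ≤ n) :
    6/((n:ℝ)+2) ≤ δ := by
  have h1 : 6/δ ≤ (n:ℝ) := le_trans (Nat.le_ceil _) (by exact_mod_cast hn)
  rw [div_le_iff₀ (by positivity : (0:ℝ) < (n:ℝ)+2)]
  rw [div_le_iff₀ hδ0] at h1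
  nlinarith [(Nat.cast_nonneg n : (0:ℝ) ≤ (n:ℝ))]

lemma XX_notUD : ¬ IsUniformlyDisconnected ↥(Set.range Phi) := by
  rintro ⟨δ, hδ0, hδ1, H⟩
  set n := max 2 ⌈6/δ⌉₊ with hn
  obtain ⟨c, hcm, hchain, hne⟩ := chain_main n (le_max_left _ _) δ
    (nat_choice_bound δ hδ0 n (le_max_right _ _))
  set xs : ℕ → ↥(Set.range Phi) := fun j => ⟨Phi (c j), Set.mem_range_self _⟩ with hxs
  have := H (n+2) xs (by
    intro i h1 h2
    rw [distXX, distXX]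
    rw [abs_sub_comm]
    exact hchain i h1 h2) (n+2) le_rfl
  exact hne (congrArg Subtype.val this)

lemma XX_SUD : SUD ↥(Set.range Phi) =
    {(⟨0, ⟨fun _ => true, Phi_allTrue⟩⟩ : ↥(Set.range Phi))} := by
  classical
  set p : ↥(Set.range Phi) := ⟨0, ⟨fun _ => true, Phi_allTrue⟩⟩ with hp
  apply Set.eq_singleton_iff_unique_mem.mpr
  constructor
  · -- p ∈ SUD
    intro s hs hUD
    obtain ⟨δ, hδ0, hδ1, H⟩ := hUD
    obtain ⟨ε, hε0, hball⟩ := Metric.mem_nhds_iff.mp hs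
    obtain ⟨K, hK⟩ := exists_pow_lt_of_lt_one (show (0:ℝ) < ε/2 by linarith)
      (show (4:ℝ)⁻¹ < 1 by norm_num)
    set n := max 2 (max ⌈6/δ⌉₊ K) with hn
    obtain ⟨c, hcm, hchain, hne⟩ := chain_main n (le_max_left _ _) δ
      (nat_choice_bound δ hδ0 n (le_trans (le_max_left _ _) (le_max_right _ _)))
    have hsmall : ∀ j, Phi (c j) < ε := by
      intro j
      obtain ⟨y, hy⟩ := hcm j
      have h1 := (Phi_mkp_mem n y).2
      have h2 : (4:ℝ)⁻¹ ^ n ≤ (4:ℝ)⁻¹ ^ K :=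
        pow_le_pow_of_le_one (by norm_num) (by norm_num)
          (le_trans (le_max_right _ _) (le_max_right _ _))
      rw [hy]
      linarith
    have hmem : ∀ j, (⟨Phi (c j), Set.mem_range_self _⟩ : ↥(Set.range Phi)) ∈ s := by
      intro j
      apply hball
      rw [Metric.mem_ball, distXX]
      have h0 : (0:ℝ) ≤ Phi (c j) := Phi_nonneg (c j)
      rw [show ((p : ↥(Set.range Phi)) : ℝ) = 0 from rfl]
      rw [sub_zero, abs_of_nonneg h0]
      exact hsmall j
    set xs : ℕ → ↥s := fun j => ⟨⟨Phi (c j), Set.mem_range_self _⟩, hmem j⟩ with hxs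
    have := H (n+2) xs (by
      intro i h1 h2
      simp only [Subtype.dist_eq, Real.dist_eq]
      rw [abs_sub_comm]
      exact hchain i h1 h2) (n+2) le_rfl
    exact hne (congrArg (fun (z : ↥s) => ((z : ↥(Set.range Phi)) : ℝ)) this)
  · -- uniqueness
    intro x hx
    by_contra hxp
    obtain ⟨w, hw⟩ := x.2
    rcases Phi_cases w with hwT | ⟨n, y, hwn⟩
    · exact hxp (Subtype.ext (by rw [← hw, hwT, Phi_allTrue]))
    · have hxval : (x:ℝ) = Phi (mkp n y) := by rw [← hw, hwn]
      apply hx (Metric.ball x ((4:ℝ)⁻¹^n/4)) (Metric.ball_mem_nhds _ (by positivity))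
      refine ⟨1/(2*((n:ℝ)+2)), by positivity, ?_, ?_⟩
      · rw [div_lt_one (by positivity)]
        have : (0:ℝ) ≤ (n:ℝ) := Nat.cast_nonneg n
        linarith
      · intro N cs hchain i hiN
        have hv : ∀ j : ℕ, ∃ w', (((cs j : ↥(Set.range Phi))) : ℝ) = Phi (mkp n w') := by
          intro j
          apply piece_local (cs j).1.2 n y
          have h2 := (cs j).2
          rw [Metric.mem_ball, Subtype.dist_eq, Real.dist_eq] at h2
          rwa [hxval] at h2
        have hY : ∀ j, (((cs j : ↥(Set.range Phi))) : ℝ) = Phi (mkp n ((hv j).choose)) :=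
          fun j => (hv j).choose_spec
        have htriv := piece_chain_trivial n N (fun j => (hv j).choose) (by
          intro i h1 h2
          have hc := hchain i h1 h2
          simp only [Subtype.dist_eq, Real.dist_eq] at hc
          show |Phi (mkp n ((hv i).choose)) - Phi (mkp n ((hv (i-1)).choose))| ≤
            1/(2*((n:ℝ)+2)) * |Phi (mkp n ((hv 0).choose)) - Phi (mkp n ((hv N).choose))|
          rw [← hY i, ← hY (i-1), ← hY 0, ← hY N, abs_sub_comm]
          exact hc) i hiN
        apply Subtype.ext
        apply Subtype.ext
        show (((cs i : ↥(Set.range Phi))) : ℝ) = (((cs 0 : ↥(Set.range Phi))) : ℝ)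
        rw [hY i, hY 0]
        exact htriv

theorem statement_12 :
    ∃ (X : Type) (m : MetricSpace X),
      @IsCantorSpace X (metricTopology m) ∧
      @HasType X m true false true ∧
      ∃ p : X, @SUD X m = {p} := by
  classical
  refine ⟨↥(Set.range Phi), inferInstance, ?_, ?_, ?_⟩
  · exact ⟨cantorHomeo1.symm.trans cantorHomeo2⟩
  · refine ⟨iff_of_true (real_subset_doubling _) rfl,
      iff_of_false XX_notUD (by simp), iff_of_true XX_UP rfl⟩
  · exact ⟨_, XX_SUD⟩

end
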